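/- arXiv:1308.5217 — 6 statements merged into one kernel-verified Lean document; each statement's English description precedes it below -/
import Mathlib

section
/- Let s_1 > s_2 be real numbers with s_1 > 0, and σ(x) = (e^{s_1 x}, e^{s_2 x}) : ℝ → ℝ². Then the total first curvature ∫_0^∞ (|σ'_1 σ''_2 − σ'_2 σ''_1| / ‖σ'‖²) dx is finite. -/
open MeasureTheory

lemma deriv_exp_const_mul (c : ℝ) :
    deriv (fun x => Real.exp (c * x)) = fun x => c * Real.exp (c * x) := by
  funext x
  simpa [mul_comm] using (((hasDerivAt_id x).const_mul c).exp).deriv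

lemma deriv2_exp_const_mul (c : ℝ) :
    deriv (deriv (fun x => Real.exp (c * x))) = fun x => c * (c * Real.exp (c * x)) := by
  rw [deriv_exp_const_mul]
  funext x
  simpa [mul_comm, mul_assoc] using ((((hasDerivAt_id x).const_mul c).exp).const_mul c).deriv

theorem stmt6 (s₁ s₂ : ℝ) (h12 : s₂ < s₁) (h1 : 0 < s₁)
    (σ₁ σ₂ : ℝ → ℝ)
    (hσ₁ : ∀ x, σ₁ x = Real.exp (s₁ * x))
    (hσ₂ : ∀ x, σ₂ x = Real.exp (s₂ * x)) :
    IntegrableOn (fun x =>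
      |deriv σ₁ x * deriv (deriv σ₂) x - deriv σ₂ x * deriv (deriv σ₁) x|
        / ((deriv σ₁ x) ^ 2 + (deriv σ₂ x) ^ 2)) (Set.Ici (0:ℝ)) := by
  have hs₁ : σ₁ = fun x => Real.exp (s₁ * x) := funext hσ₁
  have hs₂ : σ₂ = fun x => Real.exp (s₂ * x) := funext hσ₂
  subst hs₁ hs₂
  rw [deriv2_exp_const_mul, deriv2_exp_const_mul, deriv_exp_const_mul, deriv_exp_const_mul]
  simp only
  have hs₁0 : s₁ ≠ 0 := ne_of_gt h1
  -- the integrand, explicitly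
  set F : ℝ → ℝ := fun x =>
    |s₁ * Real.exp (s₁ * x) * (s₂ * (s₂ * Real.exp (s₂ * x))) -
        s₂ * Real.exp (s₂ * x) * (s₁ * (s₁ * Real.exp (s₁ * x)))| /
      ((s₁ * Real.exp (s₁ * x)) ^ 2 + (s₂ * Real.exp (s₂ * x)) ^ 2) with hF
  have hD : ∀ x : ℝ, 0 < (s₁ * Real.exp (s₁ * x)) ^ 2 + (s₂ * Real.exp (s₂ * x)) ^ 2 := by
    intro x
    have : 0 < (s₁ * Real.exp (s₁ * x)) ^ 2 := by positivity
    nlinarith [sq_nonneg (s₂ * Real.exp (s₂ * x))]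
  -- auxiliary continuous functions
  have hcont : Continuous F := by
    apply Continuous.div
    · fun_prop
    · fun_prop
    · exact fun x => ne_of_gt (hD x)
  have hb : 0 < s₁ - s₂ := by linarith
  -- dominating function
  have hg : IntegrableOn (fun x => (|s₂ * (s₂ - s₁)| / s₁) * Real.exp (-(s₁ - s₂) * x))
      (Set.Ici (0:ℝ)) := by
    rw [integrableOn_Ici_iff_integrableOn_Ioi]
    exact (exp_neg_integrableOn_Ioi 0 hb).const_mul _
  refine Integrable.mono' hg (hcont.aestronglyMeasurable.restrict) ?_
  filter_upwards with x
  have he₁ : (0:ℝ) < Real.exp (s₁ * x) := Real.exp_pos _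
  have he₂ : (0:ℝ) < Real.exp (s₂ * x) := Real.exp_pos _
  have hFnn : 0 ≤ F x := by
    rw [hF]
    positivity
  rw [Real.norm_eq_abs, abs_of_nonneg hFnn]
  simp only [hF]
  have hnum : |s₁ * Real.exp (s₁ * x) * (s₂ * (s₂ * Real.exp (s₂ * x))) -
      s₂ * Real.exp (s₂ * x) * (s₁ * (s₁ * Real.exp (s₁ * x)))|
      = |s₂ * (s₂ - s₁)| * (s₁ * Real.exp (s₁ * x) * Real.exp (s₂ * x)) := by
    rw [show s₁ * Real.exp (s₁ * x) * (s₂ * (s₂ * Real.exp (s₂ * x))) -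
        s₂ * Real.exp (s₂ * x) * (s₁ * (s₁ * Real.exp (s₁ * x)))
        = (s₂ * (s₂ - s₁)) * (s₁ * Real.exp (s₁ * x) * Real.exp (s₂ * x)) by ring,
      abs_mul, abs_of_pos (show (0:ℝ) < s₁ * Real.exp (s₁ * x) * Real.exp (s₂ * x) by positivity)]
  rw [hnum]
  have hstep : |s₂ * (s₂ - s₁)| * (s₁ * Real.exp (s₁ * x) * Real.exp (s₂ * x)) /
      ((s₁ * Real.exp (s₁ * x)) ^ 2 + (s₂ * Real.exp (s₂ * x)) ^ 2)
      ≤ |s₂ * (s₂ - s₁)| * (s₁ * Real.exp (s₁ * x) * Real.exp (s₂ * x)) /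
      ((s₁ * Real.exp (s₁ * x)) ^ 2) := by
    gcongr
    nlinarith [sq_nonneg (s₂ * Real.exp (s₂ * x))]
  refine hstep.trans_eq ?_
  have hexp : Real.exp (-(s₁ - s₂) * x) = Real.exp (s₂ * x) / Real.exp (s₁ * x) := by
    rw [← Real.exp_sub]; ring_nf
  rw [hexp]
  field_simp
end

section
/- Let s_1 > s_2 with s_1 > 0 and σ(x) = (e^{s_1 x}, e^{s_2 x}). Then for x ≥ 0, |σ'_1(x) σ''_2(x) − σ'_2(x) σ''_1(x)| / ‖σ'(x)‖² ≤ C e^{−(s_1 − s_2)x} for some constant C > 0 depending only on s_1, s_2. -/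
lemma deriv_exp_mul (s : ℝ) : deriv (fun x => Real.exp (s * x)) = fun x => s * Real.exp (s * x) := by
  funext x
  have h : HasDerivAt (fun x => Real.exp (s * x)) (Real.exp (s * x) * s) x := by
    simpa using ((hasDerivAt_id x).const_mul s).exp
  simpa [mul_comm] using h.deriv

lemma deriv2_exp_mul (s : ℝ) :
    deriv (fun x => s * Real.exp (s * x)) = fun x => s * (s * Real.exp (s * x)) := by
  funext x
  rw [deriv_const_mul _ (by
    have : HasDerivAt (fun x => Real.exp (s * x)) (Real.exp (s * x) * s) x := by
      simpa using ((hasDerivAt_id x).const_mul s).exp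
    exact this.differentiableAt)]
  rw [deriv_exp_mul]

theorem stmt7 (s₁ s₂ : ℝ) (h12 : s₂ < s₁) (h1 : 0 < s₁)
    (σ₁ σ₂ : ℝ → ℝ)
    (hσ₁ : ∀ x, σ₁ x = Real.exp (s₁ * x))
    (hσ₂ : ∀ x, σ₂ x = Real.exp (s₂ * x)) :
    ∃ C > (0:ℝ), ∀ x ≥ (0:ℝ),
      |deriv σ₁ x * deriv (deriv σ₂) x - deriv σ₂ x * deriv (deriv σ₁) x|
        / ((deriv σ₁ x) ^ 2 + (deriv σ₂ x) ^ 2)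
      ≤ C * Real.exp (-(s₁ - s₂) * x) := by
  have hσ₁' : σ₁ = fun x => Real.exp (s₁ * x) := funext hσ₁
  have hσ₂' : σ₂ = fun x => Real.exp (s₂ * x) := funext hσ₂
  subst hσ₁' hσ₂'
  set A : ℝ := |s₁ * s₂ * (s₂ - s₁)| with hA
  refine ⟨A / s₁ ^ 2 + 1, by positivity, fun x hx => ?_⟩
  simp only [deriv_exp_mul, deriv2_exp_mul]
  have e1 : Real.exp (s₁ * x) > 0 := Real.exp_pos _
  have e2 : Real.exp (s₂ * x) > 0 := Real.exp_pos _
  have hnum : s₁ * Real.exp (s₁ * x) * (s₂ * (s₂ * Real.exp (s₂ * x))) -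
      s₂ * Real.exp (s₂ * x) * (s₁ * (s₁ * Real.exp (s₁ * x)))
      = s₁ * s₂ * (s₂ - s₁) * (Real.exp (s₁ * x) * Real.exp (s₂ * x)) := by ring
  rw [hnum, abs_mul, abs_of_pos (show (0:ℝ) < Real.exp (s₁*x) * Real.exp (s₂*x) by positivity)]
  have hDpos : (0:ℝ) < (s₁ * Real.exp (s₁ * x)) ^ 2 + (s₂ * Real.exp (s₂ * x)) ^ 2 := by
    positivity
  have hDge : s₁ ^ 2 * Real.exp (s₁ * x) ^ 2 ≤
      (s₁ * Real.exp (s₁ * x)) ^ 2 + (s₂ * Real.exp (s₂ * x)) ^ 2 := by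
    nlinarith [sq_nonneg (s₂ * Real.exp (s₂ * x))]
  have step1 : A * (Real.exp (s₁ * x) * Real.exp (s₂ * x)) /
      ((s₁ * Real.exp (s₁ * x)) ^ 2 + (s₂ * Real.exp (s₂ * x)) ^ 2)
      ≤ A * (Real.exp (s₁ * x) * Real.exp (s₂ * x)) / (s₁ ^ 2 * Real.exp (s₁ * x) ^ 2) := by
    apply div_le_div_of_nonneg_left (by positivity) (by positivity) hDge
  refine step1.trans ?_
  have key : A * (Real.exp (s₁ * x) * Real.exp (s₂ * x)) / (s₁ ^ 2 * Real.exp (s₁ * x) ^ 2)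
      = (A / s₁ ^ 2) * Real.exp (-(s₁ - s₂) * x) := by
    rw [show -(s₁ - s₂) * x = s₂ * x - s₁ * x by ring, Real.exp_sub]
    field_simp
  rw [key]
  have hle : A / s₁ ^ 2 ≤ A / s₁ ^ 2 + 1 := by linarith
  exact mul_le_mul_of_nonneg_right hle (Real.exp_pos _).le
end

section
/- Let s > a be real numbers and b ≠ 0, and define σ(x) = (e^{sx}, e^{ax} cos(bx), e^{ax} sin(bx)) : ℝ → ℝ³ with s > 0. Then ∫_0^∞ (‖σ'(x) ∧ σ''(x)‖ / ‖σ'(x)‖²) dx < ∞. -/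
open MeasureTheory

lemma aux_sqrt3 (u v w : ℝ) : Real.sqrt (u^2 + v^2 + w^2) ≤ |u| + |v| + |w| := by
  rw [← Real.sqrt_sq (by positivity : (0:ℝ) ≤ |u| + |v| + |w|)]
  apply Real.sqrt_le_sqrt
  nlinarith [sq_abs u, sq_abs v, sq_abs w, mul_nonneg (abs_nonneg u) (abs_nonneg v),
    mul_nonneg (abs_nonneg u) (abs_nonneg w), mul_nonneg (abs_nonneg v) (abs_nonneg w)]

lemma aux_abs2 (A B c sn : ℝ) (hc : |c| ≤ 1) (hsn : |sn| ≤ 1) :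
    |A*c + B*sn| ≤ |A| + |B| := by
  calc |A*c + B*sn| ≤ |A*c| + |B*sn| := abs_add_le _ _
    _ = |A| * |c| + |B| * |sn| := by rw [abs_mul, abs_mul]
    _ ≤ |A| * 1 + |B| * 1 := by
        have := abs_nonneg A; have := abs_nonneg B
        gcongr
    _ = |A| + |B| := by ring

lemma aux_bnd (A B K s E F c sn q : ℝ) (hs : 0 < s) (hE : 0 < E) (hF : 0 < F)
    (hFE : F ≤ E) (hc : |c| ≤ 1) (hsn : |sn| ≤ 1) (hq : (s*E)^2 ≤ q) :
    Real.sqrt ((E * F * (A*c + B*sn))^2 + (E * F * (A*sn - B*c))^2 + (F * F * K)^2) / q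
      ≤ ((2*(|A| + |B|) + |K|) / s^2) * (F / E) := by
  have h1 : |A*c + B*sn| ≤ |A| + |B| := aux_abs2 A B c sn hc hsn
  have h2 : |A*sn - B*c| ≤ |A| + |B| := by
    have := aux_abs2 A (-B) sn c hsn hc
    simpa [abs_neg, sub_eq_add_neg, neg_mul, mul_comm] using this
  have hnum : Real.sqrt ((E * F * (A*c + B*sn))^2 + (E * F * (A*sn - B*c))^2 + (F * F * K)^2)
      ≤ E * F * (2*(|A| + |B|) + |K|) := by
    calc Real.sqrt ((E * F * (A*c + B*sn))^2 + (E * F * (A*sn - B*c))^2 + (F * F * K)^2)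
        ≤ |E * F * (A*c + B*sn)| + |E * F * (A*sn - B*c)| + |F * F * K| := aux_sqrt3 _ _ _
      _ ≤ E * F * (|A| + |B|) + E * F * (|A| + |B|) + E * F * |K| := by
          have b1 : |E * F * (A*c + B*sn)| ≤ E * F * (|A| + |B|) := by
            rw [abs_mul, abs_mul, abs_of_pos hE, abs_of_pos hF]
            exact mul_le_mul_of_nonneg_left h1 (by positivity)
          have b2 : |E * F * (A*sn - B*c)| ≤ E * F * (|A| + |B|) := by
            rw [abs_mul, abs_mul, abs_of_pos hE, abs_of_pos hF]
            exact mul_le_mul_of_nonneg_left h2 (by positivity)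
          have b3 : |F * F * K| ≤ E * F * |K| := by
            rw [abs_mul, abs_mul, abs_of_pos hF]
            have : F * F ≤ E * F := mul_le_mul_of_nonneg_right hFE hF.le
            exact mul_le_mul_of_nonneg_right this (abs_nonneg K)
          linarith
      _ = E * F * (2*(|A| + |B|) + |K|) := by ring
  have hq0 : (0:ℝ) < (s*E)^2 := by positivity
  calc Real.sqrt ((E * F * (A*c + B*sn))^2 + (E * F * (A*sn - B*c))^2 + (F * F * K)^2) / q
      ≤ (E * F * (2*(|A| + |B|) + |K|)) / ((s*E)^2) := by
        apply div_le_div₀ (by positivity) hnum hq0 hq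
    _ = ((2*(|A| + |B|) + |K|) / s^2) * (F / E) := by
        field_simp

theorem stmt8 (s a b : ℝ) (hsa : a < s) (hs : 0 < s) (hb : b ≠ 0)
    (σ₁ σ₂ σ₃ : ℝ → ℝ)
    (hσ₁ : ∀ x, σ₁ x = Real.exp (s * x))
    (hσ₂ : ∀ x, σ₂ x = Real.exp (a * x) * Real.cos (b * x))
    (hσ₃ : ∀ x, σ₃ x = Real.exp (a * x) * Real.sin (b * x))
    (wedgeSq speedSq : ℝ → ℝ)
    (hw : ∀ x, wedgeSq x =
      (deriv σ₁ x * deriv (deriv σ₂) x - deriv σ₂ x * deriv (deriv σ₁) x) ^ 2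
      + (deriv σ₁ x * deriv (deriv σ₃) x - deriv σ₃ x * deriv (deriv σ₁) x) ^ 2
      + (deriv σ₂ x * deriv (deriv σ₃) x - deriv σ₃ x * deriv (deriv σ₂) x) ^ 2)
    (hsp : ∀ x, speedSq x = (deriv σ₁ x) ^ 2 + (deriv σ₂ x) ^ 2 + (deriv σ₃ x) ^ 2) :
    IntegrableOn (fun x => Real.sqrt (wedgeSq x) / speedSq x) (Set.Ici (0:ℝ)) := by
  have hf1 : σ₁ = fun x => Real.exp (s * x) := funext hσ₁
  have hf2 : σ₂ = fun x => Real.exp (a * x) * Real.cos (b * x) := funext hσ₂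
  have hf3 : σ₃ = fun x => Real.exp (a * x) * Real.sin (b * x) := funext hσ₃
  subst hf1 hf2 hf3
  -- derivatives
  have hmul : ∀ (c x : ℝ), HasDerivAt (fun y : ℝ => c * y) c x := fun c x => by
    simpa using (hasDerivAt_id x).const_mul c
  have hE1 : ∀ x : ℝ, HasDerivAt (fun y => Real.exp (s*y)) (s * Real.exp (s*x)) x := fun x => by
    simpa [mul_comm] using (hmul s x).exp
  have hd1 : deriv (fun y => Real.exp (s*y)) = fun x => s * Real.exp (s*x) :=
    funext fun x => (hE1 x).deriv
  have hdd1 : deriv (deriv (fun y => Real.exp (s*y))) = fun x => s * (s * Real.exp (s*x)) := by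
    rw [hd1]; exact funext fun x => ((hE1 x).const_mul s).deriv
  have hE2 : ∀ x : ℝ, HasDerivAt (fun y => Real.exp (a*y)) (a * Real.exp (a*x)) x := fun x => by
    simpa [mul_comm] using (hmul a x).exp
  have hC : ∀ x : ℝ, HasDerivAt (fun y => Real.cos (b*y)) (-(b * Real.sin (b*x))) x := fun x => by
    simpa [mul_comm] using (hmul b x).cos
  have hS : ∀ x : ℝ, HasDerivAt (fun y => Real.sin (b*y)) (b * Real.cos (b*x)) x := fun x => by
    simpa [mul_comm] using (hmul b x).sin
  have h2 : ∀ x : ℝ, HasDerivAt (fun y => Real.exp (a*y) * Real.cos (b*y))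
      (Real.exp (a*x) * (a * Real.cos (b*x) - b * Real.sin (b*x))) x := fun x => by
    have := (hE2 x).fun_mul (hC x)
    exact this.congr_deriv (by ring)
  have hd2 : deriv (fun y => Real.exp (a*y) * Real.cos (b*y))
      = fun x => Real.exp (a*x) * (a * Real.cos (b*x) - b * Real.sin (b*x)) :=
    funext fun x => (h2 x).deriv
  have h2' : ∀ x : ℝ, HasDerivAt (fun y => Real.exp (a*y) * (a * Real.cos (b*y) - b * Real.sin (b*y)))
      (Real.exp (a*x) * ((a^2-b^2) * Real.cos (b*x) - 2*a*b * Real.sin (b*x))) x := fun x => by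
    have := (hE2 x).fun_mul (((hC x).const_mul a).fun_sub ((hS x).const_mul b))
    exact this.congr_deriv (by ring)
  have hdd2 : deriv (deriv (fun y => Real.exp (a*y) * Real.cos (b*y)))
      = fun x => Real.exp (a*x) * ((a^2-b^2) * Real.cos (b*x) - 2*a*b * Real.sin (b*x)) := by
    rw [hd2]; exact funext fun x => (h2' x).deriv
  have h3 : ∀ x : ℝ, HasDerivAt (fun y => Real.exp (a*y) * Real.sin (b*y))
      (Real.exp (a*x) * (a * Real.sin (b*x) + b * Real.cos (b*x))) x := fun x => by
    have := (hE2 x).fun_mul (hS x)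
    exact this.congr_deriv (by ring)
  have hd3 : deriv (fun y => Real.exp (a*y) * Real.sin (b*y))
      = fun x => Real.exp (a*x) * (a * Real.sin (b*x) + b * Real.cos (b*x)) :=
    funext fun x => (h3 x).deriv
  have h3' : ∀ x : ℝ, HasDerivAt (fun y => Real.exp (a*y) * (a * Real.sin (b*y) + b * Real.cos (b*y)))
      (Real.exp (a*x) * ((a^2-b^2) * Real.sin (b*x) + 2*a*b * Real.cos (b*x))) x := fun x => by
    have := (hE2 x).fun_mul (((hS x).const_mul a).fun_add ((hC x).const_mul b))
    exact this.congr_deriv (by ring)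
  have hdd3 : deriv (deriv (fun y => Real.exp (a*y) * Real.sin (b*y)))
      = fun x => Real.exp (a*x) * ((a^2-b^2) * Real.sin (b*x) + 2*a*b * Real.cos (b*x)) := by
    rw [hd3]; exact funext fun x => (h3' x).deriv
  -- explicit forms
  have hWx : ∀ x : ℝ, wedgeSq x =
      (Real.exp (s*x) * Real.exp (a*x) * ((s*(a^2-b^2) - s^2*a) * Real.cos (b*x) + (s^2*b - 2*s*a*b) * Real.sin (b*x)))^2
      + (Real.exp (s*x) * Real.exp (a*x) * ((s*(a^2-b^2) - s^2*a) * Real.sin (b*x) - (s^2*b - 2*s*a*b) * Real.cos (b*x)))^2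
      + (Real.exp (a*x) * Real.exp (a*x) * (b*(a^2+b^2)))^2 := by
    intro x
    rw [hw x, hdd1, hdd2, hdd3, hd1, hd2, hd3]
    beta_reduce
    have hcs := Real.sin_sq_add_cos_sq (b*x)
    linear_combination ((Real.exp (a*x) * Real.exp (a*x) * (b*(a^2+b^2)))^2
      * (Real.sin (b*x)^2 + Real.cos (b*x)^2 + 1)) * hcs
  have hPx : ∀ x : ℝ, speedSq x =
      (s * Real.exp (s*x))^2
      + (Real.exp (a*x) * (a * Real.cos (b*x) - b * Real.sin (b*x)))^2
      + (Real.exp (a*x) * (a * Real.sin (b*x) + b * Real.cos (b*x)))^2 := by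
    intro x
    rw [hsp x, hd1, hd2, hd3]
  have hfun : (fun x => Real.sqrt (wedgeSq x) / speedSq x)
      = fun x => Real.sqrt (
      (Real.exp (s*x) * Real.exp (a*x) * ((s*(a^2-b^2) - s^2*a) * Real.cos (b*x) + (s^2*b - 2*s*a*b) * Real.sin (b*x)))^2
      + (Real.exp (s*x) * Real.exp (a*x) * ((s*(a^2-b^2) - s^2*a) * Real.sin (b*x) - (s^2*b - 2*s*a*b) * Real.cos (b*x)))^2
      + (Real.exp (a*x) * Real.exp (a*x) * (b*(a^2+b^2)))^2) /
      ((s * Real.exp (s*x))^2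
      + (Real.exp (a*x) * (a * Real.cos (b*x) - b * Real.sin (b*x)))^2
      + (Real.exp (a*x) * (a * Real.sin (b*x) + b * Real.cos (b*x)))^2) := by
    funext x; rw [hWx x, hPx x]
  rw [hfun]
  set C : ℝ := (2*(|s*(a^2-b^2) - s^2*a| + |s^2*b - 2*s*a*b|) + |b*(a^2+b^2)|) / s^2 with hC
  have hg : IntegrableOn (fun x => C * Real.exp ((a-s)*x)) (Set.Ici (0:ℝ)) := by
    rw [integrableOn_Ici_iff_integrableOn_Ioi]
    have h1 := (exp_neg_integrableOn_Ioi (0:ℝ) (by linarith : (0:ℝ) < s - a)).const_mul C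
    have h2 : (fun x => C * Real.exp ((a-s)*x)) = fun x => C * Real.exp (-(s-a)*x) := by
      funext x; rw [show (a-s)*x = -(s-a)*x by ring]
    rw [h2]; exact h1
  apply Integrable.mono' hg
  · apply Measurable.aestronglyMeasurable
    apply Measurable.div
    · exact (Real.continuous_sqrt.comp (by fun_prop)).measurable
    · exact (by fun_prop : Continuous fun x : ℝ =>
        (s * Real.exp (s*x))^2
        + (Real.exp (a*x) * (a * Real.cos (b*x) - b * Real.sin (b*x)))^2
        + (Real.exp (a*x) * (a * Real.sin (b*x) + b * Real.cos (b*x)))^2).measurable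
  · rw [MeasureTheory.ae_restrict_iff' measurableSet_Ici]
    apply Filter.Eventually.of_forall
    intro x hx
    have hx0 : (0:ℝ) ≤ x := hx
    rw [Real.norm_eq_abs, abs_of_nonneg (by positivity)]
    have hq : (s * Real.exp (s*x))^2 ≤
        (s * Real.exp (s*x))^2
        + (Real.exp (a*x) * (a * Real.cos (b*x) - b * Real.sin (b*x)))^2
        + (Real.exp (a*x) * (a * Real.sin (b*x) + b * Real.cos (b*x)))^2 := by
      nlinarith [sq_nonneg (Real.exp (a*x) * (a * Real.cos (b*x) - b * Real.sin (b*x))),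
        sq_nonneg (Real.exp (a*x) * (a * Real.sin (b*x) + b * Real.cos (b*x)))]
    have hFE : Real.exp (a*x) ≤ Real.exp (s*x) := by
      apply Real.exp_le_exp.mpr
      nlinarith
    have h := aux_bnd (s*(a^2-b^2) - s^2*a) (s^2*b - 2*s*a*b) (b*(a^2+b^2)) s
      (Real.exp (s*x)) (Real.exp (a*x)) (Real.cos (b*x)) (Real.sin (b*x)) _
      hs (Real.exp_pos _) (Real.exp_pos _) hFE
      (Real.abs_cos_le_one _) (Real.abs_sin_le_one _) hq
    calc _ ≤ C * (Real.exp (a*x) / Real.exp (s*x)) := h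
      _ = C * Real.exp ((a-s)*x) := by
          rw [← Real.exp_sub, show a*x - s*x = (a-s)*x by ring]
end

section
/- Let a ≥ s with a > 0 and b ≠ 0, and σ(x) = (e^{sx}, e^{ax} cos(bx), e^{ax} sin(bx)). Then there is a constant c > 0 with ‖σ'(x) ∧ σ''(x)‖ / ‖σ'(x)‖² ≥ c for all x ≥ 0, and hence ∫_0^∞ (‖σ' ∧ σ''‖/‖σ'‖²) dx = ∞. -/
open MeasureTheory

private lemma aux_hd (a b p q x : ℝ) :
    HasDerivAt (fun x => Real.exp (a*x) * (p * Real.cos (b*x) + q * Real.sin (b*x)))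
      (Real.exp (a*x) * ((a*p + b*q) * Real.cos (b*x) + (a*q - b*p) * Real.sin (b*x))) x := by
  have hax : HasDerivAt (fun y : ℝ => a*y) a x := by
    simpa using (hasDerivAt_id x).const_mul a
  have hbx : HasDerivAt (fun y : ℝ => b*y) b x := by
    simpa using (hasDerivAt_id x).const_mul b
  have h := hax.exp.mul ((hbx.cos.const_mul p).add (hbx.sin.const_mul q))
  exact h.congr_deriv (by simp only [Pi.add_apply]; ring)

private lemma aux_hd1 (s c x : ℝ) :
    HasDerivAt (fun x => Real.exp (s*x) * c) (Real.exp (s*x) * (s*c)) x := by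
  have hsx : HasDerivAt (fun y : ℝ => s*y) s x := by
    simpa using (hasDerivAt_id x).const_mul s
  have h := hsx.exp.mul_const c
  exact h.congr_deriv (by ring)

theorem stmt9 (s a b : ℝ) (hsa : s ≤ a) (ha : 0 < a) (hb : b ≠ 0)
    (σ₁ σ₂ σ₃ : ℝ → ℝ)
    (hσ₁ : ∀ x, σ₁ x = Real.exp (s * x))
    (hσ₂ : ∀ x, σ₂ x = Real.exp (a * x) * Real.cos (b * x))
    (hσ₃ : ∀ x, σ₃ x = Real.exp (a * x) * Real.sin (b * x))
    (wedgeSq speedSq : ℝ → ℝ)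
    (hw : ∀ x, wedgeSq x =
      (deriv σ₁ x * deriv (deriv σ₂) x - deriv σ₂ x * deriv (deriv σ₁) x) ^ 2
      + (deriv σ₁ x * deriv (deriv σ₃) x - deriv σ₃ x * deriv (deriv σ₁) x) ^ 2
      + (deriv σ₂ x * deriv (deriv σ₃) x - deriv σ₃ x * deriv (deriv σ₂) x) ^ 2)
    (hsp : ∀ x, speedSq x = (deriv σ₁ x) ^ 2 + (deriv σ₂ x) ^ 2 + (deriv σ₃ x) ^ 2) :
    (∃ c > (0:ℝ), ∀ x ≥ (0:ℝ), c ≤ Real.sqrt (wedgeSq x) / speedSq x) ∧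
    ¬ IntegrableOn (fun x => Real.sqrt (wedgeSq x) / speedSq x) (Set.Ici (0:ℝ)) := by
  -- function-level descriptions
  have hσ₁f : σ₁ = fun x => Real.exp (s*x) * 1 := funext fun x => by rw [hσ₁ x]; ring
  have hσ₂f : σ₂ = fun x => Real.exp (a*x) * (1 * Real.cos (b*x) + 0 * Real.sin (b*x)) :=
    funext fun x => by rw [hσ₂ x]; ring
  have hσ₃f : σ₃ = fun x => Real.exp (a*x) * (0 * Real.cos (b*x) + 1 * Real.sin (b*x)) :=
    funext fun x => by rw [hσ₃ x]; ring
  -- first derivatives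
  have d1 : ∀ x, deriv σ₁ x = Real.exp (s*x) * (s*1) := fun x => by
    rw [hσ₁f]; exact (aux_hd1 s 1 x).deriv
  have d2 : ∀ x, deriv σ₂ x =
      Real.exp (a*x) * ((a*1 + b*0) * Real.cos (b*x) + (a*0 - b*1) * Real.sin (b*x)) := fun x => by
    rw [hσ₂f]; exact (aux_hd a b 1 0 x).deriv
  have d3 : ∀ x, deriv σ₃ x =
      Real.exp (a*x) * ((a*0 + b*1) * Real.cos (b*x) + (a*1 - b*0) * Real.sin (b*x)) := fun x => by
    rw [hσ₃f]; exact (aux_hd a b 0 1 x).deriv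
  -- second derivatives
  have d1'' : ∀ x, deriv (deriv σ₁) x = Real.exp (s*x) * (s*(s*1)) := fun x => by
    rw [funext d1]; exact (aux_hd1 s (s*1) x).deriv
  have d2'' : ∀ x, deriv (deriv σ₂) x =
      Real.exp (a*x) * ((a*(a*1+b*0) + b*(a*0-b*1)) * Real.cos (b*x)
        + (a*(a*0-b*1) - b*(a*1+b*0)) * Real.sin (b*x)) := fun x => by
    rw [funext d2]; exact (aux_hd a b (a*1+b*0) (a*0-b*1) x).deriv
  have d3'' : ∀ x, deriv (deriv σ₃) x =
      Real.exp (a*x) * ((a*(a*0+b*1) + b*(a*1-b*0)) * Real.cos (b*x)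
        + (a*(a*1-b*0) - b*(a*0+b*1)) * Real.sin (b*x)) := fun x => by
    rw [funext d3]; exact (aux_hd a b (a*0+b*1) (a*1-b*0) x).deriv
  -- the third wedge component
  have hw3 : ∀ x, deriv σ₂ x * deriv (deriv σ₃) x - deriv σ₃ x * deriv (deriv σ₂) x
      = Real.exp (a*x)^2 * (b*(a^2+b^2)) := by
    intro x
    rw [d2 x, d3'' x, d3 x, d2'' x]
    linear_combination (Real.exp (a*x)^2 * (b*(a^2+b^2))) * Real.sin_sq_add_cos_sq (b*x)
  -- lower bound on sqrt of wedgeSq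
  have hsqrt : ∀ x, Real.exp (a*x)^2 * (|b| * (a^2+b^2)) ≤ Real.sqrt (wedgeSq x) := by
    intro x
    have hwlb : (Real.exp (a*x)^2 * (|b| * (a^2+b^2)))^2 ≤ wedgeSq x := by
      rw [hw x, hw3 x]
      nlinarith [sq_nonneg (deriv σ₁ x * deriv (deriv σ₂) x - deriv σ₂ x * deriv (deriv σ₁) x),
        sq_nonneg (deriv σ₁ x * deriv (deriv σ₃) x - deriv σ₃ x * deriv (deriv σ₁) x),
        sq_abs b, sq_nonneg (Real.exp (a*x)^2 * (a^2+b^2))]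
    have h := Real.sqrt_le_sqrt hwlb
    rwa [Real.sqrt_sq (by positivity)] at h
  -- speedSq identity
  have hspeq : ∀ x, speedSq x = Real.exp (s*x)^2 * s^2 + Real.exp (a*x)^2 * (a^2+b^2) := by
    intro x
    rw [hsp x, d1 x, d2 x, d3 x]
    linear_combination (Real.exp (a*x)^2 * (a^2+b^2)) * Real.sin_sq_add_cos_sq (b*x)
  have hpos : ∀ x, 0 < speedSq x := by
    intro x
    rw [hspeq x]
    have h1 : 0 < Real.exp (a*x)^2 * (a^2+b^2) := by positivity
    nlinarith [sq_nonneg (Real.exp (s*x) * s)]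
  have hub : ∀ x ≥ (0:ℝ), speedSq x ≤ Real.exp (a*x)^2 * (s^2 + (a^2+b^2)) := by
    intro x hx
    rw [hspeq x]
    have h1 : Real.exp (s*x) ≤ Real.exp (a*x) := Real.exp_le_exp.mpr (by nlinarith)
    have h2 : Real.exp (s*x)^2 ≤ Real.exp (a*x)^2 := by
      nlinarith [Real.exp_pos (s*x), Real.exp_pos (a*x)]
    nlinarith [sq_nonneg s]
  have hc : (0:ℝ) < |b| * (a^2+b^2) / (s^2 + (a^2+b^2)) := by
    have h1 : 0 < |b| := abs_pos.mpr hb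
    have h2 : 0 < a^2+b^2 := by positivity
    have h3 : 0 < s^2 + (a^2+b^2) := by positivity
    positivity
  have hden : (s^2 + (a^2+b^2)) ≠ 0 := by positivity
  -- the uniform lower bound
  have hbound : ∀ x ≥ (0:ℝ),
      |b| * (a^2+b^2) / (s^2 + (a^2+b^2)) ≤ Real.sqrt (wedgeSq x) / speedSq x := by
    intro x hx
    rw [le_div_iff₀ (hpos x)]
    calc |b| * (a^2+b^2) / (s^2 + (a^2+b^2)) * speedSq x
        ≤ |b| * (a^2+b^2) / (s^2 + (a^2+b^2)) * (Real.exp (a*x)^2 * (s^2 + (a^2+b^2))) :=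
          mul_le_mul_of_nonneg_left (hub x hx) hc.le
      _ = Real.exp (a*x)^2 * (|b| * (a^2+b^2)) := by field_simp
      _ ≤ Real.sqrt (wedgeSq x) := hsqrt x
  constructor
  · exact ⟨_, hc, hbound⟩
  · intro hI
    have hconst : Integrable (fun _ : ℝ => |b| * (a^2+b^2) / (s^2 + (a^2+b^2)))
        (volume.restrict (Set.Ici (0:ℝ))) := by
      refine Integrable.mono hI aestronglyMeasurable_const ?_
      filter_upwards [ae_restrict_mem measurableSet_Ici] with x hx
      have h1 := hbound x hx
      rw [Real.norm_eq_abs, Real.norm_eq_abs, abs_of_pos hc]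
      exact h1.trans (le_abs_self _)
    rw [integrable_const_iff] at hconst
    rcases hconst with h | h
    · exact hc.ne' h
    · have h := h.measure_univ_lt_top
      rw [Measure.restrict_apply_univ, Real.volume_Ici] at h
      exact lt_irrefl _ h
end

section
/- Let n ≥ 2 and σ(x) = (1, x, x², ..., x^{n−1}) : ℝ → ℝ^n. Then ∫_{−∞}^{∞} (‖σ'(x) ∧ σ''(x)‖ / ‖σ'(x)‖²) dx < ∞, i.e. the moment curve's derivative curve has finite total first curvature. -/
open MeasureTheory Finset

lemma auxD1 (i : ℕ) : deriv (fun x : ℝ => x ^ i) = fun x => (i:ℝ) * x ^ (i-1) := by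
  funext x; simp

lemma auxD2 (m : ℕ) : deriv (fun x : ℝ => (m:ℝ) * x ^ (m-1))
    = fun x => (m:ℝ) * ((m-1:ℕ):ℝ) * x ^ (m-2) := by
  funext x
  rw [deriv_const_mul _ (differentiable_pow _).differentiableAt, deriv_pow_field]
  have h : m - 1 - 1 = m - 2 := by omega
  rw [h]; ring

lemma auxG (n : ℕ) (x s : ℝ) (h2 : ∀ m, m ≤ 2*(n-2) → x^(2*m) ≤ s^2)
    (c e : ℕ) (hc : c ≤ n^3) (hce : c = 0 ∨ e + 2 ≤ 2*(n-2)) :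
    ((c:ℝ) * x^e)^2 * (1+x^2)^2 ≤ 4 * (n:ℝ)^6 * s^2 := by
  rcases hce with h0 | he
  · subst h0
    have hs2 : (0:ℝ) ≤ s^2 := sq_nonneg s
    simp
    positivity
  · have key : ((c:ℝ)*x^e)^2*(1+x^2)^2
        = (c:ℝ)^2 * (x^(2*e) + 2*x^(2*(e+1)) + x^(2*(e+2))) := by ring
    have hA := h2 e (by omega)
    have hB := h2 (e+1) (by omega)
    have hC := h2 (e+2) he
    have hcn : (c:ℝ)^2 ≤ (n:ℝ)^6 := by
      have h : ((c:ℕ):ℝ) ≤ ((n^3:ℕ):ℝ) := by exact_mod_cast hc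
      have hc0 : (0:ℝ) ≤ (c:ℝ) := by positivity
      push_cast at h
      nlinarith
    rw [key]
    have hsum : x^(2*e) + 2*x^(2*(e+1)) + x^(2*(e+2)) ≤ 4 * s^2 := by linarith
    calc (c:ℝ)^2 * (x^(2*e) + 2*x^(2*(e+1)) + x^(2*(e+2)))
        ≤ (c:ℝ)^2 * (4*s^2) := mul_le_mul_of_nonneg_left hsum (by positivity)
      _ ≤ (n:ℝ)^6 * (4*s^2) := mul_le_mul_of_nonneg_right hcn (by positivity)
      _ = 4 * (n:ℝ)^6 * s^2 := by ring

theorem stmt10 (n : ℕ) (hn : 2 ≤ n)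
    (σ : Fin n → ℝ → ℝ) (hσ : ∀ i x, σ i x = x ^ (i : ℕ))
    (wedgeSq speedSq : ℝ → ℝ)
    (hw : ∀ x, wedgeSq x = ∑ i : Fin n, ∑ j : Fin n,
      if i < j then (deriv (σ i) x * deriv (deriv (σ j)) x
        - deriv (σ j) x * deriv (deriv (σ i)) x) ^ 2 else 0)
    (hsp : ∀ x, speedSq x = ∑ i : Fin n, (deriv (σ i) x) ^ 2) :
    Integrable (fun x => Real.sqrt (wedgeSq x) / speedSq x) := by
  have hd1 : ∀ i : Fin n, deriv (σ i) = fun x : ℝ => ((i:ℕ):ℝ) * x ^ ((i:ℕ) - 1) := by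
    intro i
    have h : σ i = fun x => x ^ (i:ℕ) := funext (hσ i)
    rw [h, auxD1]
  have hd2 : ∀ i : Fin n, deriv (deriv (σ i))
      = fun x : ℝ => ((i:ℕ):ℝ) * (((i:ℕ)-1:ℕ):ℝ) * x ^ ((i:ℕ) - 2) := by
    intro i
    rw [hd1 i, auxD2]
  -- speed lower bounds
  have hF1 : ∀ (x : ℝ) (k : ℕ), k ≤ n - 2 → x^(2*k) ≤ speedSq x := by
    intro x k hk
    rw [hsp x]
    set i0 : Fin n := ⟨k+1, by omega⟩ with hi0
    have hval : (i0:ℕ) = k + 1 := rfl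
    have h1 : x^(2*k) ≤ (deriv (σ i0) x)^2 := by
      rw [hd1 i0, hval]
      have h2 : k + 1 - 1 = k := by omega
      rw [h2]
      have h3 : x^(2*k) = (x^k)^2 := by rw [pow_mul']
      have h4 : (1:ℝ) ≤ ((k+1:ℕ):ℝ) := by exact_mod_cast Nat.le_add_left 1 k
      rw [h3]
      show (x^k)^2 ≤ (((k+1:ℕ):ℝ) * x ^ k)^2
      have h6 : (1:ℝ) ≤ ((k+1:ℕ):ℝ)^2 := by nlinarith
      calc (x^k)^2 = 1 * (x^k)^2 := (one_mul _).symm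
        _ ≤ ((k+1:ℕ):ℝ)^2 * (x^k)^2 := mul_le_mul_of_nonneg_right h6 (sq_nonneg _)
        _ = (((k+1:ℕ):ℝ) * x ^ k)^2 := by ring
    exact h1.trans (Finset.single_le_sum (f := fun i : Fin n => (deriv (σ i) x)^2)
      (fun i _ => sq_nonneg _) (mem_univ i0))
  have hs1 : ∀ x : ℝ, 1 ≤ speedSq x := by
    intro x
    simpa using hF1 x 0 (by omega)
  have hF2 : ∀ (x : ℝ) (m : ℕ), m ≤ 2*(n-2) → x^(2*m) ≤ (speedSq x)^2 := by
    intro x m hm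
    set a := min m (n-2) with ha
    set b := m - a with hb
    have h1 : a ≤ n - 2 := min_le_right _ _
    have h2 : b ≤ n - 2 := by omega
    have h3 : 2*m = 2*a + 2*b := by omega
    rw [h3, pow_add]
    have hxb : (0:ℝ) ≤ x^(2*b) := by rw [pow_mul']; positivity
    have hs0 : (0:ℝ) ≤ speedSq x := le_trans zero_le_one (hs1 x)
    calc x^(2*a) * x^(2*b) ≤ speedSq x * speedSq x :=
          mul_le_mul (hF1 x a h1) (hF1 x b h2) hxb hs0
      _ = (speedSq x)^2 := (sq (speedSq x)).symm
  -- per-pair bound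
  have hPair : ∀ (x : ℝ) (i j : Fin n), i < j →
      (deriv (σ i) x * deriv (deriv (σ j)) x
        - deriv (σ j) x * deriv (deriv (σ i)) x)^2 * (1+x^2)^2
      ≤ 16 * (n:ℝ)^6 * (speedSq x)^2 := by
    intro x i j hij
    have hij' : (i:ℕ) < (j:ℕ) := hij
    have hin : (i:ℕ) < n := i.isLt
    have hjn : (j:ℕ) < n := j.isLt
    simp only [hd2]
    simp only [hd1]
    set vi := (i:ℕ) with hvi
    set vj := (j:ℕ) with hvj
    set cA := vi*(vj*(vj-1)) with hcA
    set eA := (vi-1)+(vj-2) with heA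
    set cB := vj*(vi*(vi-1)) with hcB
    set eB := (vj-1)+(vi-2) with heB
    have hA : (vi:ℝ) * x^(vi-1) * ((vj:ℝ) * ((vj-1:ℕ):ℝ) * x^(vj-2))
        = ((cA:ℕ):ℝ) * x^eA := by
      rw [hcA, heA, pow_add]; push_cast; ring
    have hB : (vj:ℝ) * x^(vj-1) * ((vi:ℝ) * ((vi-1:ℕ):ℝ) * x^(vi-2))
        = ((cB:ℕ):ℝ) * x^eB := by
      rw [hcB, heB, pow_add]; push_cast; ring
    rw [hA, hB]
    have hcAle : cA ≤ n^3 := by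
      have : vi*(vj*(vj-1)) ≤ n*(n*n) :=
        Nat.mul_le_mul (le_of_lt hin) (Nat.mul_le_mul (le_of_lt hjn) (by omega))
      calc cA ≤ n*(n*n) := this
        _ = n^3 := by ring
    have hcBle : cB ≤ n^3 := by
      have : vj*(vi*(vi-1)) ≤ n*(n*n) :=
        Nat.mul_le_mul (le_of_lt hjn) (Nat.mul_le_mul (le_of_lt hin) (by omega))
      calc cB ≤ n*(n*n) := this
        _ = n^3 := by ring
    have hdA : cA = 0 ∨ eA + 2 ≤ 2*(n-2) := by
      by_cases h0 : vi = 0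
      · left; rw [hcA, h0]; simp
      · right; omega
    have hdB : cB = 0 ∨ eB + 2 ≤ 2*(n-2) := by
      by_cases h0 : vi ≤ 1
      · left
        have : vi - 1 = 0 := by omega
        rw [hcB, this]; simp
      · right; omega
    have hGA := auxG n x (speedSq x) (hF2 x) cA eA hcAle hdA
    have hGB := auxG n x (speedSq x) (hF2 x) cB eB hcBle hdB
    nlinarith [hGA, hGB,
      mul_nonneg (sq_nonneg ((cA:ℝ)*x^eA + (cB:ℝ)*x^eB)) (sq_nonneg (1+x^2))]
  -- key global bound
  have hKey : ∀ x : ℝ, wedgeSq x * (1+x^2)^2 ≤ 16 * (n:ℝ)^8 * (speedSq x)^2 := by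
    intro x
    have hs0 : (0:ℝ) ≤ speedSq x := le_trans zero_le_one (hs1 x)
    rw [hw x, Finset.sum_mul]
    simp only [Finset.sum_mul]
    have hterm : ∀ i j : Fin n,
        (if i < j then (deriv (σ i) x * deriv (deriv (σ j)) x
          - deriv (σ j) x * deriv (deriv (σ i)) x)^2 else 0) * (1+x^2)^2
        ≤ 16 * (n:ℝ)^6 * (speedSq x)^2 := by
      intro i j
      split_ifs with h
      · exact hPair x i j h
      · rw [zero_mul]; positivity
    calc (∑ i : Fin n, ∑ j : Fin n,
          (if i < j then (deriv (σ i) x * deriv (deriv (σ j)) x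
            - deriv (σ j) x * deriv (deriv (σ i)) x)^2 else 0) * (1+x^2)^2)
        ≤ ∑ _i : Fin n, ∑ _j : Fin n, 16 * (n:ℝ)^6 * (speedSq x)^2 :=
          Finset.sum_le_sum (fun i _ => Finset.sum_le_sum (fun j _ => hterm i j))
      _ = (n:ℝ) * ((n:ℝ) * (16 * (n:ℝ)^6 * (speedSq x)^2)) := by
          simp [Finset.sum_const, card_univ, mul_comm]
      _ = 16 * (n:ℝ)^8 * (speedSq x)^2 := by ring
  -- wedge nonneg
  have hw0 : ∀ x : ℝ, 0 ≤ wedgeSq x := by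
    intro x
    rw [hw x]
    refine Finset.sum_nonneg (fun i _ => Finset.sum_nonneg (fun j _ => ?_))
    split_ifs
    · exact sq_nonneg _
    · exact le_refl 0
  -- pointwise bound
  have hbound : ∀ x : ℝ, ‖Real.sqrt (wedgeSq x) / speedSq x‖
      ≤ 4 * (n:ℝ)^4 * (1/(1+x^2)) := by
    intro x
    have hx2 : (0:ℝ) < 1 + x^2 := by positivity
    have hs : (0:ℝ) < speedSq x := lt_of_lt_of_le one_pos (hs1 x)
    rw [Real.norm_of_nonneg (div_nonneg (Real.sqrt_nonneg _) hs.le)]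
    have h1 : Real.sqrt (wedgeSq x) ≤ 4*(n:ℝ)^4 * speedSq x / (1+x^2) := by
      have h2 : wedgeSq x ≤ (4*(n:ℝ)^4 * speedSq x / (1+x^2))^2 := by
        rw [div_pow, le_div_iff₀ (by positivity)]
        refine le_trans (hKey x) (le_of_eq ?_)
        ring
      calc Real.sqrt (wedgeSq x) ≤ Real.sqrt ((4*(n:ℝ)^4 * speedSq x / (1+x^2))^2) :=
            Real.sqrt_le_sqrt h2
        _ = 4*(n:ℝ)^4 * speedSq x / (1+x^2) := Real.sqrt_sq (by positivity)
    have h3 : Real.sqrt (wedgeSq x) / speedSq x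
        ≤ (4*(n:ℝ)^4 * speedSq x / (1+x^2)) / speedSq x :=
      div_le_div_of_nonneg_right h1 hs.le
    have h4 : (4*(n:ℝ)^4 * speedSq x / (1+x^2)) / speedSq x
        = 4*(n:ℝ)^4 * (1/(1+x^2)) := by
      field_simp
    rw [h4] at h3
    exact h3
  -- continuity
  have hcw : Continuous wedgeSq := by
    have heq : wedgeSq = fun x => ∑ i : Fin n, ∑ j : Fin n,
        if i < j then (deriv (σ i) x * deriv (deriv (σ j)) x
          - deriv (σ j) x * deriv (deriv (σ i)) x) ^ 2 else 0 := funext hw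
    rw [heq]
    refine continuous_finset_sum _ (fun i _ => continuous_finset_sum _ (fun j _ => ?_))
    simp only [hd2]
    simp only [hd1]
    split_ifs
    · fun_prop
    · exact continuous_const
  have hcs : Continuous speedSq := by
    have heq : speedSq = fun x => ∑ i : Fin n, (deriv (σ i) x) ^ 2 := funext hsp
    rw [heq]
    refine continuous_finset_sum _ (fun i _ => ?_)
    simp only [hd1]
    fun_prop
  have hcont : Continuous (fun x => Real.sqrt (wedgeSq x) / speedSq x) := by
    refine Continuous.div (Real.continuous_sqrt.comp hcw) hcs (fun x => ?_)
    exact ne_of_gt (lt_of_lt_of_le one_pos (hs1 x))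
  -- integrable majorant
  have hg : Integrable (fun x : ℝ => 4*(n:ℝ)^4 * (1/(1+x^2))) := by
    refine Integrable.const_mul ?_ _
    simpa [one_div] using integrable_inv_one_add_sq
  exact hg.mono' hcont.aestronglyMeasurable (ae_of_all _ hbound)
end

section
/- Let s₁ > s₂ > ... > s_k be reals with s₁ > 0, and σ(x) = (e^{s₁x}, ..., e^{s_k x}). Then there exist constants C₁, C₂, ε > 0 such that for all x ≥ 0: ‖σ'(x)‖² ≥ C₁ e^{2 s₁ x} and ‖σ'(x) ∧ σ''(x)‖ ≤ C₂ e^{(2 s₁ − ε) x}, where ε = s₁ − s₂; consequently ∫_0^∞ ‖σ' ∧ σ''‖/‖σ'‖² dx < ∞. -/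
open MeasureTheory Finset

theorem stmt19 (k : ℕ) (hk : 2 ≤ k) (s : Fin k → ℝ) (hs : StrictAnti s)
    (hs1 : 0 < s ⟨0, by omega⟩)
    (wedgeSq speedSq : ℝ → ℝ)
    (hw : ∀ x, wedgeSq x = ∑ i : Fin k, ∑ j : Fin k,
      if i < j then (s i * Real.exp (s i * x) * (s j ^ 2 * Real.exp (s j * x))
        - s j * Real.exp (s j * x) * (s i ^ 2 * Real.exp (s i * x))) ^ 2 else 0)
    (hsp : ∀ x, speedSq x = ∑ i : Fin k, (s i * Real.exp (s i * x)) ^ 2) :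
    ∃ C₁ > (0:ℝ), ∃ C₂ > (0:ℝ),
      (∀ x ≥ (0:ℝ),
        C₁ * Real.exp (2 * s ⟨0, by omega⟩ * x) ≤ speedSq x ∧
        Real.sqrt (wedgeSq x)
          ≤ C₂ * Real.exp ((2 * s ⟨0, by omega⟩ - (s ⟨0, by omega⟩ - s ⟨1, by omega⟩)) * x)) ∧
      IntegrableOn (fun x => Real.sqrt (wedgeSq x) / speedSq x) (Set.Ici (0:ℝ)) := by
  have hk0 : (0:ℕ) < k := by omega
  set i0 : Fin k := ⟨0, by omega⟩ with hi0
  set i1 : Fin k := ⟨1, by omega⟩ with hi1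
  have hs0pos : 0 < s i0 := hs1
  have h01 : s i1 < s i0 := hs (by simp [hi0, hi1, Fin.mk_lt_mk])
  set s0 : ℝ := s i0 with hs0def
  set s1 : ℝ := s i1 with hs1def
  -- constants
  set A : ℝ := 1 + ∑ i, |s i| with hAdef
  have hA1 : 1 ≤ A := by
    have h : 0 ≤ ∑ i, |s i| := Finset.sum_nonneg fun i _ => abs_nonneg _
    simp only [hAdef]; linarith
  have hA0 : 0 < A := lt_of_lt_of_le one_pos hA1
  have hsA : ∀ i, |s i| ≤ A := by
    intro i
    have h := Finset.single_le_sum (f := fun i => |s i|) (fun i _ => abs_nonneg _)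
      (Finset.mem_univ i)
    simp only [hAdef]; linarith
  set C₁ : ℝ := s0 ^ 2 with hC₁def
  set C₂ : ℝ := 2 * k * A ^ 3 with hC₂def
  have hC₁ : 0 < C₁ := pow_pos hs0pos 2
  have hkR : (0:ℝ) < (k:ℝ) := by exact_mod_cast hk0
  have hC₂ : 0 < C₂ := by
    have := pow_pos hA0 3
    have h2 : (0:ℝ) < 2 * k := by linarith
    exact mul_pos h2 this
  -- lower bound on speedSq
  have hlow : ∀ x : ℝ, C₁ * Real.exp (2 * s0 * x) ≤ speedSq x := by
    intro x
    rw [hsp]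
    have h := Finset.single_le_sum (f := fun i => (s i * Real.exp (s i * x)) ^ 2)
      (fun i _ => sq_nonneg _) (Finset.mem_univ i0)
    have heq : (s i0 * Real.exp (s i0 * x)) ^ 2 = C₁ * Real.exp (2 * s0 * x) := by
      rw [mul_pow, hC₁def, sq (Real.exp _), ← Real.exp_add, ← hs0def]
      congr 1
      ring
    rw [← heq]
    simpa using h
  have hsppos : ∀ x : ℝ, 0 < speedSq x := fun x =>
    lt_of_lt_of_le (mul_pos hC₁ (Real.exp_pos _)) (hlow x)
  -- upper bound on wedgeSq
  have hup : ∀ x : ℝ, 0 ≤ x → wedgeSq x ≤ (C₂ * Real.exp ((s0 + s1) * x)) ^ 2 := by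
    intro x hx
    rw [hw]
    have hbound : ∀ i j : Fin k,
        (if i < j then (s i * Real.exp (s i * x) * (s j ^ 2 * Real.exp (s j * x))
          - s j * Real.exp (s j * x) * (s i ^ 2 * Real.exp (s i * x))) ^ 2 else 0)
        ≤ (2 * A ^ 3 * Real.exp ((s0 + s1) * x)) ^ 2 := by
      intro i j
      have hpos : 0 ≤ 2 * A ^ 3 * Real.exp ((s0 + s1) * x) :=
        mul_nonneg (mul_nonneg (by norm_num) (pow_nonneg hA0.le 3)) (Real.exp_pos _).le
      split_ifs with hij
      · have heq : s i * Real.exp (s i * x) * (s j ^ 2 * Real.exp (s j * x))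
            - s j * Real.exp (s j * x) * (s i ^ 2 * Real.exp (s i * x))
            = s i * s j * (s j - s i) * Real.exp ((s i + s j) * x) := by
          rw [add_mul, Real.exp_add]; ring
        have hile : s i ≤ s0 := hs.antitone (show i0 ≤ i by simp [hi0, Fin.le_def])
        have hjle : s j ≤ s1 := by
          refine hs.antitone ?_
          have : (i.val : ℕ) < j.val := hij
          simp only [hi1, Fin.le_def]
          omega
        have hE : Real.exp ((s i + s j) * x) ≤ Real.exp ((s0 + s1) * x) :=
          Real.exp_le_exp.mpr (mul_le_mul_of_nonneg_right (by linarith) hx)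
        obtain ⟨hi1', hi2'⟩ := abs_le.mp (hsA i)
        obtain ⟨hj1', hj2'⟩ := abs_le.mp (hsA j)
        have h3 : |s j - s i| ≤ 2 * A := abs_le.mpr ⟨by linarith, by linarith⟩
        have hprod : |s i * s j * (s j - s i)| ≤ 2 * A ^ 3 := by
          rw [abs_mul, abs_mul]
          calc |s i| * |s j| * |s j - s i| ≤ A * A * (2 * A) :=
                mul_le_mul (mul_le_mul (hsA i) (hsA j) (abs_nonneg _) hA0.le) h3
                  (abs_nonneg _) (mul_nonneg hA0.le hA0.le)
            _ = 2 * A ^ 3 := by ring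
        have habs : |s i * s j * (s j - s i) * Real.exp ((s i + s j) * x)|
            ≤ 2 * A ^ 3 * Real.exp ((s0 + s1) * x) := by
          rw [abs_mul, abs_of_pos (Real.exp_pos _)]
          exact mul_le_mul hprod hE (Real.exp_pos _).le
            (mul_nonneg (by norm_num) (pow_nonneg hA0.le 3))
        obtain ⟨ha1, ha2⟩ := abs_le.mp habs
        rw [heq]
        exact sq_le_sq' ha1 ha2
      · exact sq_nonneg _
    calc (∑ i : Fin k, ∑ j : Fin k,
        if i < j then (s i * Real.exp (s i * x) * (s j ^ 2 * Real.exp (s j * x))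
          - s j * Real.exp (s j * x) * (s i ^ 2 * Real.exp (s i * x))) ^ 2 else 0)
        ≤ ∑ _i : Fin k, ∑ _j : Fin k, (2 * A ^ 3 * Real.exp ((s0 + s1) * x)) ^ 2 :=
          Finset.sum_le_sum fun i _ => Finset.sum_le_sum fun j _ => hbound i j
      _ = (C₂ * Real.exp ((s0 + s1) * x)) ^ 2 := by
          rw [Finset.sum_const, Finset.sum_const, Finset.card_univ, Fintype.card_fin,
            nsmul_eq_mul, nsmul_eq_mul, hC₂def]
          ring
  have hsqrt : ∀ x : ℝ, 0 ≤ x →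
      Real.sqrt (wedgeSq x) ≤ C₂ * Real.exp ((s0 + s1) * x) := by
    intro x hx
    have h := Real.sqrt_le_sqrt (hup x hx)
    rwa [Real.sqrt_sq (mul_nonneg hC₂.le (Real.exp_pos _).le)] at h
  -- continuity
  have hcontw : Continuous wedgeSq := by
    have hweq : wedgeSq = fun x => ∑ i : Fin k, ∑ j : Fin k,
        if i < j then (s i * Real.exp (s i * x) * (s j ^ 2 * Real.exp (s j * x))
          - s j * Real.exp (s j * x) * (s i ^ 2 * Real.exp (s i * x))) ^ 2 else 0 :=
      funext hw
    rw [hweq]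
    apply continuous_finset_sum
    intro i _
    apply continuous_finset_sum
    intro j _
    split_ifs with hij
    · fun_prop
    · exact continuous_const
  have hcontsp : Continuous speedSq := by
    have hspe : speedSq = fun x => ∑ i : Fin k, (s i * Real.exp (s i * x)) ^ 2 := funext hsp
    rw [hspe]
    apply continuous_finset_sum
    intro i _
    fun_prop
  have hcontf : Continuous (fun x => Real.sqrt (wedgeSq x) / speedSq x) :=
    (Real.continuous_sqrt.comp hcontw).div hcontsp fun x => (hsppos x).ne'
  refine ⟨C₁, hC₁, C₂, hC₂, fun x hx => ⟨hlow x, ?_⟩, ?_⟩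
  · show Real.sqrt (wedgeSq x) ≤ C₂ * Real.exp ((2 * s0 - (s0 - s1)) * x)
    calc Real.sqrt (wedgeSq x) ≤ C₂ * Real.exp ((s0 + s1) * x) := hsqrt x hx
      _ = C₂ * Real.exp ((2 * s0 - (s0 - s1)) * x) := by
          rw [show (s0 + s1) * x = (2 * s0 - (s0 - s1)) * x from by ring]
  · -- integrability
    have hgint : IntegrableOn (fun x => (C₂ / C₁) * Real.exp (-(s0 - s1) * x))
        (Set.Ici (0:ℝ)) := by
      rw [integrableOn_Ici_iff_integrableOn_Ioi]
      exact (exp_neg_integrableOn_Ioi 0 (by linarith : (0:ℝ) < s0 - s1)).const_mul _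
    apply Integrable.mono' hgint hcontf.aestronglyMeasurable.restrict
    rw [ae_restrict_iff' measurableSet_Ici]
    filter_upwards with x hx
    rw [Real.norm_eq_abs,
      abs_of_nonneg (div_nonneg (Real.sqrt_nonneg _) (hsppos x).le)]
    calc Real.sqrt (wedgeSq x) / speedSq x
        ≤ (C₂ * Real.exp ((s0 + s1) * x)) / (C₁ * Real.exp (2 * s0 * x)) :=
          div_le_div₀ (mul_nonneg hC₂.le (Real.exp_pos _).le) (hsqrt x hx)
            (mul_pos hC₁ (Real.exp_pos _)) (hlow x)
      _ = (C₂ / C₁) * Real.exp (-(s0 - s1) * x) := by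
          rw [mul_div_mul_comm, ← Real.exp_sub,
            show (s0 + s1) * x - 2 * s0 * x = -(s0 - s1) * x from by ring]
end
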